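/- Let 0<γ<1. For all t, s ∈ [0,1], the Caputo derivative of order γ in the first variable of the kernel H satisfies |ᶜDᵞₜH(t,s)| ≤ 3/Γ(2−γ). -/

import Mathlib

open MeasureTheory Set intervalIntegral

/-- Kernel `H` associated to the fractional BVP. -/
noncomputable def kernelH (t s : ℝ) : ℝ :=
  if s ≤ t then (t - s) + (1 - t) * (2 - s) else (1 - t) * (2 - s)

/-- Caputo fractional derivative of order `γ ∈ (0,1)`. -/
noncomputable def caputo (γ : ℝ) (u : ℝ → ℝ) (t : ℝ) : ℝ :=
  (1 / Real.Gamma (1 - γ)) * ∫ s in (0:ℝ)..t, (t - s) ^ (-γ) * deriv u s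

/-- Caputo derivative of order `γ` of the kernel `H` in its first variable. -/
noncomputable def caputoH (γ t s : ℝ) : ℝ :=
  caputo γ (fun r => kernelH r s) t

lemma deriv_kernelH (s : ℝ) {r : ℝ} (hr : r ≠ s) :
    deriv (fun x => kernelH x s) r = if s ≤ r then s - 1 else s - 2 := by
  rcases lt_or_gt_of_ne hr with h | h
  · have hev : (fun x => kernelH x s) =ᶠ[nhds r] fun x => (1 - x) * (2 - s) := by
      filter_upwards [Iio_mem_nhds h] with x hx
      simp [kernelH, not_le.mpr (mem_Iio.mp hx)]
    rw [hev.deriv_eq, if_neg (not_le.mpr h)]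
    have hd : HasDerivAt (fun x : ℝ => (1 - x) * (2 - s)) (-(1:ℝ) * (2 - s)) r :=
      ((hasDerivAt_id r).const_sub 1).mul_const _
    rw [hd.deriv]; ring
  · have hev : (fun x => kernelH x s) =ᶠ[nhds r] fun x => (x - s) + (1 - x) * (2 - s) := by
      filter_upwards [Ioi_mem_nhds h] with x hx
      simp [kernelH, le_of_lt (mem_Ioi.mp hx)]
    rw [hev.deriv_eq, if_pos (le_of_lt h)]
    have hd : HasDerivAt (fun x : ℝ => (x - s) + (1 - x) * (2 - s))
        (1 + -(1:ℝ) * (2 - s)) r :=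
      ((hasDerivAt_id r).sub_const s).add (((hasDerivAt_id r).const_sub 1).mul_const _)
    rw [hd.deriv]; ring

/-- For `0 < γ < 1`, the Caputo derivative of order `γ` of the kernel `H` in its
first variable satisfies `|ᶜDᵞₜH(t,s)| ≤ 3/Γ(2−γ)` on the unit square. -/
theorem caputoH_bound (γ : ℝ) (hγ1 : 0 < γ) (hγ2 : γ < 1) :
    ∀ t ∈ Icc (0:ℝ) 1, ∀ s ∈ Icc (0:ℝ) 1,
      |caputoH γ t s| ≤ 3 / Real.Gamma (2 - γ) := by
  rintro t ⟨ht0, ht1⟩ s ⟨hs0, hs1⟩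
  have h1γ : (0:ℝ) < 1 - γ := by linarith
  have hG : 0 < Real.Gamma (1 - γ) := Real.Gamma_pos_of_pos h1γ
  -- a.e. bound on the derivative
  have hae : ∀ᵐ r : ℝ, r ≠ s := by
    rw [ae_iff]
    simpa using measure_singleton s
  have hbound : ∀ᵐ r : ℝ, |deriv (fun x => kernelH x s) r| ≤ 2 := by
    filter_upwards [hae] with r hr
    rw [deriv_kernelH s hr]
    split_ifs <;> rw [abs_le] <;> constructor <;> linarith
  -- integrability
  have hrpow : IntervalIntegrable (fun x : ℝ => x ^ (-γ)) volume 0 t :=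
    intervalIntegral.intervalIntegrable_rpow' (by linarith)
  have hg : IntervalIntegrable (fun r => (t - r) ^ (-γ)) volume 0 t := by
    simpa using (hrpow.comp_sub_left t).symm
  have hmeas : AEStronglyMeasurable (fun r => deriv (fun x => kernelH x s) r)
      (volume.restrict (Set.uIoc (0:ℝ) t)) :=
    (measurable_deriv _).aestronglyMeasurable
  have hInt : IntervalIntegrable
      (fun r => (t - r) ^ (-γ) * deriv (fun x => kernelH x s) r) volume 0 t := by
    rw [intervalIntegrable_iff] at hg ⊢
    have := Integrable.bdd_mul (c := 2) hg hmeas ?_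
    · simpa [mul_comm, IntegrableOn] using this
    · filter_upwards [ae_restrict_of_ae hbound] with r hr
      simpa [Real.norm_eq_abs] using hr
  have hg2 : IntervalIntegrable (fun r => 2 * (t - r) ^ (-γ)) volume 0 t :=
    hg.const_mul 2
  -- pointwise a.e. comparison on [0, t]
  have hptwise : (fun r => |(t - r) ^ (-γ) * deriv (fun x => kernelH x s) r|)
      ≤ᵐ[volume.restrict (Icc (0:ℝ) t)] fun r => 2 * (t - r) ^ (-γ) := by
    filter_upwards [ae_restrict_of_ae hbound, ae_restrict_mem measurableSet_Icc]
      with r hr hrmem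
    have hnn : (0:ℝ) ≤ (t - r) ^ (-γ) :=
      Real.rpow_nonneg (by linarith [hrmem.2]) _
    rw [abs_mul, abs_of_nonneg hnn, mul_comm (2:ℝ)]
    exact mul_le_mul_of_nonneg_left hr hnn
  have habs : |∫ r in (0:ℝ)..t, (t - r) ^ (-γ) * deriv (fun x => kernelH x s) r|
      ≤ ∫ r in (0:ℝ)..t, 2 * (t - r) ^ (-γ) :=
    (intervalIntegral.abs_integral_le_integral_abs ht0).trans
      (intervalIntegral.integral_mono_ae_restrict ht0 hInt.abs hg2 hptwise)
  -- compute the dominating integral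
  have hcomp : (∫ r in (0:ℝ)..t, (t - r) ^ (-γ)) = ∫ x in (0:ℝ)..t, x ^ (-γ) := by
    simpa using intervalIntegral.integral_comp_sub_left (a := 0) (b := t) (fun x : ℝ => x ^ (-γ)) t
  have hval : (∫ r in (0:ℝ)..t, 2 * (t - r) ^ (-γ)) = 2 * (t ^ (1 - γ) / (1 - γ)) := by
    rw [intervalIntegral.integral_const_mul, hcomp,
      integral_rpow (Or.inl (by linarith : (-1:ℝ) < -γ))]
    rw [Real.zero_rpow (by linarith : -γ + 1 ≠ 0)]
    ring_nf
  -- final estimate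
  have hT : t ^ (1 - γ) ≤ 1 := Real.rpow_le_one ht0 ht1 (by linarith)
  have hTnn : 0 ≤ t ^ (1 - γ) := Real.rpow_nonneg ht0 _
  have hΓ2 : Real.Gamma (2 - γ) = (1 - γ) * Real.Gamma (1 - γ) := by
    have h : (2:ℝ) - γ = (1 - γ) + 1 := by ring
    rw [h, Real.Gamma_add_one (by linarith)]
  have hcap : |caputoH γ t s|
      = (1 / Real.Gamma (1 - γ)) *
        |∫ r in (0:ℝ)..t, (t - r) ^ (-γ) * deriv (fun x => kernelH x s) r| := by
    unfold caputoH caputo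
    rw [abs_mul, abs_of_nonneg (by positivity : (0:ℝ) ≤ 1 / Real.Gamma (1 - γ))]
  rw [hcap, hΓ2]
  calc (1 / Real.Gamma (1 - γ)) *
        |∫ r in (0:ℝ)..t, (t - r) ^ (-γ) * deriv (fun x => kernelH x s) r|
      ≤ (1 / Real.Gamma (1 - γ)) * (2 * (t ^ (1 - γ) / (1 - γ))) := by
        apply mul_le_mul_of_nonneg_left _ (by positivity)
        rw [← hval]; exact habs
    _ ≤ 3 / ((1 - γ) * Real.Gamma (1 - γ)) := by
        rw [div_mul_eq_mul_div, one_mul, div_le_div_iff₀ hG (by positivity)]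
        have hXT : t ^ (1 - γ) / (1 - γ) * (1 - γ) = t ^ (1 - γ) :=
          div_mul_cancel₀ _ (ne_of_gt h1γ)
        nlinarith [hXT, mul_nonneg hTnn hG.le]
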